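/- Let k be a field and let a, b, c, b', c', α be natural numbers with 0 < b' < b, 0 < c' < c, 0 < α < a. In k[x, y, z], the ideal L = (x^a − y^{b'}z^{c'}, y^b, z^c, x^{a−α}y^{b−b'}, x^{a−α}z^{c−c'}) is generated by the five 4×4 sub-Pfaffians (equivalently, the square roots of the principal 4×4 minors) of the 5×5 alternating matrix M with M₁₃ = −y^{b'}, M₁₅ = x^{a−α}, M₂₃ = −z^{c−c'}, M₂₄ = y^{b−b'}, M₃₄ = x^{α}, M₄₅ = z^{c'}, all other above-diagonal entries zero, and M antisymmetric. -/
import Mathlib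


open MvPolynomial Matrix

/-- The Pfaffian of a 4×4 alternating matrix. -/
def pfaffian4 {R : Type*} [CommRing R] (A : Matrix (Fin 4) (Fin 4) R) : R :=
  A 0 1 * A 2 3 - A 0 2 * A 1 3 + A 0 3 * A 1 2

/-- The 4×4 sub-Pfaffian of a 5×5 alternating matrix obtained by deleting
row `i` and column `i`. -/
def subPfaffian5 {R : Type*} [CommRing R] (M : Matrix (Fin 5) (Fin 5) R)
    (i : Fin 5) : R :=
  pfaffian4 (M.submatrix i.succAbove i.succAbove)

/-- The 5×5 alternating matrix of the paper, with entries in `k[x,y,z]`. -/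
noncomputable def pfMatrix (k : Type*) [Field k] (a b c b' c' α : ℕ) :
    Matrix (Fin 5) (Fin 5) (MvPolynomial (Fin 3) k) :=
  !![0, 0, -(X 1 ^ b'), 0, X 0 ^ (a - α);
     0, 0, -(X 2 ^ (c - c')), X 1 ^ (b - b'), 0;
     X 1 ^ b', X 2 ^ (c - c'), 0, X 0 ^ α, 0;
     0, -(X 1 ^ (b - b')), -(X 0 ^ α), 0, X 2 ^ c';
     -(X 0 ^ (a - α)), 0, 0, -(X 2 ^ c'), 0]

lemma pf0 (k : Type*) [Field k] (a b c b' c' α : ℕ) (hc : c' ≤ c) :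
    subPfaffian5 (pfMatrix k a b c b' c' α) 0 = -(X 2 ^ c) := by
  simp (config := { decide := true }) [subPfaffian5, pfaffian4, pfMatrix, Fin.succAbove,
    Fin.castSucc, Fin.castAdd, Fin.castLE, show ((3:Fin 4):ℕ) = 3 from rfl]
  rw [← pow_add, Nat.sub_add_cancel hc]

lemma pf1 (k : Type*) [Field k] (a b c b' c' α : ℕ) (ha : α ≤ a) :
    subPfaffian5 (pfMatrix k a b c b' c' α) 1 = X 0 ^ a - X 1 ^ b' * X 2 ^ c' := by
  simp (config := { decide := true }) [subPfaffian5, pfaffian4, pfMatrix, Fin.succAbove,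
    Fin.castSucc, Fin.castAdd, Fin.castLE, show ((3:Fin 4):ℕ) = 3 from rfl]
  rw [← pow_add, Nat.sub_add_cancel ha]
  ring

lemma pf2 (k : Type*) [Field k] (a b c b' c' α : ℕ) :
    subPfaffian5 (pfMatrix k a b c b' c' α) 2 = X 0 ^ (a - α) * X 1 ^ (b - b') := by
  simp (config := { decide := true }) [subPfaffian5, pfaffian4, pfMatrix, Fin.succAbove,
    Fin.castSucc, Fin.castAdd, Fin.castLE, show ((3:Fin 4):ℕ) = 3 from rfl]

lemma pf3 (k : Type*) [Field k] (a b c b' c' α : ℕ) :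
    subPfaffian5 (pfMatrix k a b c b' c' α) 3 = -(X 0 ^ (a - α) * X 2 ^ (c - c')) := by
  simp (config := { decide := true }) [subPfaffian5, pfaffian4, pfMatrix, Fin.succAbove,
    Fin.castSucc, Fin.castAdd, Fin.castLE, show ((3:Fin 4):ℕ) = 3 from rfl]

lemma pf4 (k : Type*) [Field k] (a b c b' c' α : ℕ) (hb : b' ≤ b) :
    subPfaffian5 (pfMatrix k a b c b' c' α) 4 = X 1 ^ b := by
  simp (config := { decide := true }) [subPfaffian5, pfaffian4, pfMatrix, Fin.succAbove,
    Fin.castSucc, Fin.castAdd, Fin.castLE, show ((3:Fin 4):ℕ) = 3 from rfl]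
  rw [← pow_add, Nat.add_sub_cancel' hb]

theorem stmt_13 (k : Type*) [Field k] (a b c b' c' α : ℕ)
    (hb'0 : 0 < b') (hb'b : b' < b) (hc'0 : 0 < c') (hc'c : c' < c)
    (hα0 : 0 < α) (hαa : α < a) :
    (pfMatrix k a b c b' c' α)ᵀ = -(pfMatrix k a b c b' c' α) ∧
    (Ideal.span {X 0 ^ a - X 1 ^ b' * X 2 ^ c', X 1 ^ b, X 2 ^ c,
        X 0 ^ (a - α) * X 1 ^ (b - b'), X 0 ^ (a - α) * X 2 ^ (c - c')} :
        Ideal (MvPolynomial (Fin 3) k)) =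
      Ideal.span {p | ∃ i : Fin 5, subPfaffian5 (pfMatrix k a b c b' c' α) i = p} := by
  constructor
  · ext i j
    fin_cases i <;> fin_cases j <;> simp [pfMatrix]
  · have h0 := pf0 k a b c b' c' α hc'c.le
    have h1 := pf1 k a b c b' c' α hαa.le
    have h2 := pf2 k a b c b' c' α
    have h3 := pf3 k a b c b' c' α
    have h4 := pf4 k a b c b' c' α hb'b.le
    apply le_antisymm <;> rw [Ideal.span_le] <;> intro p hp
    · simp only [Set.mem_insert_iff, Set.mem_singleton_iff] at hp
      rcases hp with rfl | rfl | rfl | rfl | rfl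
      · exact Ideal.subset_span ⟨1, h1⟩
      · exact Ideal.subset_span ⟨4, h4⟩
      · rw [← neg_neg (X 2 ^ c : MvPolynomial (Fin 3) k)]
        exact neg_mem (Ideal.subset_span ⟨0, h0⟩)
      · exact Ideal.subset_span ⟨2, h2⟩
      · rw [← neg_neg (X 0 ^ (a - α) * X 2 ^ (c - c') : MvPolynomial (Fin 3) k)]
        exact neg_mem (Ideal.subset_span ⟨3, h3⟩)
    · obtain ⟨i, rfl⟩ := hp
      fin_cases i
      · show subPfaffian5 (pfMatrix k a b c b' c' α) 0 ∈ _
        rw [h0]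
        exact neg_mem (Ideal.subset_span (by simp))
      · show subPfaffian5 (pfMatrix k a b c b' c' α) 1 ∈ _
        rw [h1]; exact Ideal.subset_span (by simp)
      · show subPfaffian5 (pfMatrix k a b c b' c' α) 2 ∈ _
        rw [h2]; exact Ideal.subset_span (by simp)
      · show subPfaffian5 (pfMatrix k a b c b' c' α) 3 ∈ _
        rw [h3]
        exact neg_mem (Ideal.subset_span (by simp))
      · show subPfaffian5 (pfMatrix k a b c b' c' α) 4 ∈ _
        rw [h4]; exact Ideal.subset_span (by simp)
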